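/- (Energy conservation, k = +1 TRW.) Let k = 1, κ ≠ 0, let a : ℝ → ℝ be positive and twice differentiable, ρ, p : ℝ → ℝ differentiable, F : ℝ → ℝ twice differentiable, and set T(t) := 6((ȧ/a)² − k/a²). If for all t the field equations −F(T)/2 + 6 F'(T)(ȧ/a)² = κρ and F(T) − 6 F'(T)(ä/a + (ȧ/a)² − k/a²) − 6 F''(T) Ṫ (ȧ/a) = κ(ρ + 3p) hold, then ρ̇ = −3(ȧ/a)(ρ + p) for all t. -/

import Mathlib

/-!
STATEMENT 11 (Energy conservation, k = +1 TRW): with k = 1 and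
T = 6((ȧ/a)² − k/a²), the two F(T) field equations imply ρ̇ = −3(ȧ/a)(ρ + p).
-/

theorem energy_conservation_k_pos_one
    (k κ : ℝ) (hk : k = 1) (hκ : κ ≠ 0)
    (a ρ p F : ℝ → ℝ)
    (hapos : ∀ t, 0 < a t)
    (ha : Differentiable ℝ a) (ha' : Differentiable ℝ (deriv a))
    (hρ : Differentiable ℝ ρ) (hp : Differentiable ℝ p)
    (hF : Differentiable ℝ F) (hF' : Differentiable ℝ (deriv F))
    (T : ℝ → ℝ) (hT : ∀ t, T t = 6 * ((deriv a t / a t) ^ 2 - k / (a t) ^ 2))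
    (feq1 : ∀ t, -(F (T t)) / 2
        + 6 * deriv F (T t) * (deriv a t / a t) ^ 2 = κ * ρ t)
    (feq2 : ∀ t, F (T t)
        - 6 * deriv F (T t)
            * (deriv (deriv a) t / a t + (deriv a t / a t) ^ 2 - k / (a t) ^ 2)
        - 6 * deriv (deriv F) (T t) * deriv T t * (deriv a t / a t)
          = κ * (ρ t + 3 * p t)) :
    ∀ t, deriv ρ t = -3 * (deriv a t / a t) * (ρ t + p t) := by
  subst hk
  intro t
  have hA : a t ≠ 0 := (hapos t).ne'
  have hA2 : (a t) ^ 2 ≠ 0 := pow_ne_zero _ hA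
  have hA3 : (a t) ^ 3 ≠ 0 := pow_ne_zero _ hA
  have hA5 : (a t) ^ 5 ≠ 0 := pow_ne_zero _ hA
  set A := a t with hAdef
  set A' := deriv a t with hA'def
  set A'' := deriv (deriv a) t with hA''def
  have hq : HasDerivAt (fun s => deriv a s / a s)
      ((A'' * A - A' * A') / A ^ 2) t :=
    (ha' t).hasDerivAt.div (ha t).hasDerivAt hA
  have hq2 : HasDerivAt (fun s => (deriv a s / a s) ^ 2)
      (2 * A' * (A'' * A - A' * A') / A ^ 3) t := by
    refine (hq.pow 2).congr_deriv ?_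
    push_cast
    simp only [← hAdef, ← hA'def]
    field_simp
  have hpow : HasDerivAt (fun s => (a s) ^ 2) ((2 : ℕ) * A ^ 1 * A') t :=
    (ha t).hasDerivAt.pow 2
  have hinv : HasDerivAt (fun s => (1 : ℝ) / (a s) ^ 2) (-2 * A' / A ^ 3) t := by
    refine ((hasDerivAt_const t (1 : ℝ)).div hpow hA2).congr_deriv ?_
    push_cast
    simp only [← hAdef, ← hA'def]
    field_simp
    first | ring1 | exact Or.inl (by ring) | exact Or.inr (by ring)
  set Td : ℝ := 12 * A' * (A'' * A - A' ^ 2 + 1) / A ^ 3 with hTddef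
  have hTfun : T = fun s => 6 * ((deriv a s / a s) ^ 2 - 1 / (a s) ^ 2) :=
    funext fun s => hT s
  have hTder : HasDerivAt T Td t := by
    rw [hTfun]
    refine ((hq2.sub hinv).const_mul 6).congr_deriv ?_
    rw [hTddef]
    field_simp
    first | ring1 | exact Or.inl (by ring) | exact Or.inr (by ring)
  have hDT : deriv T t = Td := hTder.deriv
  have hFT : HasDerivAt (fun s => F (T s)) (deriv F (T t) * Td) t :=
    (hF (T t)).hasDerivAt.comp t hTder
  have hF'T : HasDerivAt (fun s => deriv F (T s)) (deriv (deriv F) (T t) * Td) t :=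
    (hF' (T t)).hasDerivAt.comp t hTder
  set D : ℝ := 6 * deriv F (T t) * A' * (A'' * A - A' ^ 2 - 1) / A ^ 3
      + 72 * deriv (deriv F) (T t) * A' ^ 3 * (A'' * A - A' ^ 2 + 1) / A ^ 5
    with hDdef
  have hRHS : HasDerivAt
      (fun s => -(F (T s)) / 2 + 6 * deriv F (T s) * (deriv a s / a s) ^ 2) D t := by
    refine ((hFT.neg.div_const 2).add ((hF'T.const_mul 6).mul hq2)).congr_deriv ?_
    rw [hDdef, hTddef]
    simp only [← hAdef, ← hA'def]
    field_simp
    first | ring1 | exact Or.inl (by ring) | exact Or.inr (by ring)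
  have hfun : (fun s => κ * ρ s)
      = fun s => -(F (T s)) / 2 + 6 * deriv F (T s) * (deriv a s / a s) ^ 2 :=
    funext fun s => (feq1 s).symm
  have hκρ : HasDerivAt (fun s => κ * ρ s) D t := hfun ▸ hRHS
  have hκρ' : κ * deriv ρ t = D := (((hρ t).hasDerivAt.const_mul κ).unique hκρ)
  have e1 := feq1 t
  have e2 := feq2 t
  rw [hDT, hTddef] at e2
  apply mul_left_cancel₀ hκ
  rw [hκρ', hDdef]
  linear_combination (norm := (simp only [← hAdef, ← hA'def, ← hA''def]; field_simp; ring1))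
    (-2 * (A' / A)) * e1 - (A' / A) * e2
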